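/- Let k be a field and N a positive integer. Equip k^N × k^N with the symmetric bilinear form B((x,x'),(y,y')) = ∑_{i=1}^N x_i y_i − ∑_{i=1}^N x'_i y'_i. Suppose C is a subspace of k^N × k^N with C = C^⊥ with respect to B and such that the projection of C onto the first factor is all of k^N. Then there exists a matrix A ∈ k^{N×N} with A·Aᵀ = I_N such that C = {(x, xA) : x ∈ k^N}, where xA denotes the row vector x multiplied by A. -/

import Mathlib

open Matrix
/-- The symmetric bilinear form `B((x,x'),(y,y')) = ∑ x_i y_i − ∑ x'_i y'_i` on
`k^N × k^N` (as a function of two arguments). -/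
def hypForm (k : Type*) [Field k] (N : ℕ) :
    ((Fin N → k) × (Fin N → k)) → ((Fin N → k) × (Fin N → k)) → k :=
  fun p q => (∑ i : Fin N, p.1 i * q.1 i) - ∑ i : Fin N, p.2 i * q.2 i


noncomputable def hypBilin (k : Type*) [Field k] (N : ℕ) :
    LinearMap.BilinForm k ((Fin N → k) × (Fin N → k)) :=
  LinearMap.mk₂ k (hypForm k N)
    (fun p p' q => by simp [hypForm, add_mul, Finset.sum_add_distrib]; ring)
    (fun c p q => by simp [hypForm, mul_assoc, Finset.mul_sum, mul_sub])
    (fun p q q' => by simp [hypForm, mul_add, Finset.sum_add_distrib]; ring)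
    (fun c p q => by
      simp [hypForm, Finset.mul_sum, mul_sub, mul_left_comm])

lemma hypBilin_apply (k : Type*) [Field k] (N : ℕ) (p q) :
    hypBilin k N p q = hypForm k N p q := rfl

lemma hypBilin_symm (k : Type*) [Field k] (N : ℕ) : (hypBilin k N).IsSymm := by
  constructor
  intro p q
  simp [hypBilin_apply, hypForm, mul_comm]

lemma hypBilin_nondeg (k : Type*) [Field k] (N : ℕ) : (hypBilin k N).Nondegenerate := by
  refine LinearMap.BilinForm.Nondegenerate.ofSeparatingLeft ?_
  intro m hm
  ext i
  · have := hm (Pi.single i 1, 0)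
    simpa [hypBilin_apply, hypForm, Pi.single_apply, mul_ite, Finset.sum_ite_eq] using this
  · have := hm (0, Pi.single i 1)
    simpa [hypBilin_apply, hypForm, Pi.single_apply, mul_ite, Finset.sum_ite_eq] using this

/-- Let `k` be a field, `N` positive, and `C` a subspace of `k^N × k^N` with
`C = C^⊥` with respect to `B((x,x'),(y,y')) = ∑ x_i y_i − ∑ x'_i y'_i`, whose
projection onto the first factor is all of `k^N`.  Then there is a matrix `A` with
`A·Aᵀ = I_N` such that `C = {(x, xA) : x ∈ k^N}` (row-vector convention). -/
theorem selfDual_code_with_full_projection_is_graph (k : Type*) [Field k]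
    (N : ℕ) (hN : 0 < N) (C : Submodule k ((Fin N → k) × (Fin N → k)))
    (hsd : (C : Set ((Fin N → k) × (Fin N → k))) = {w | ∀ c ∈ C, hypForm k N w c = 0})
    (hproj : ∀ x : Fin N → k, ∃ x' : Fin N → k, (x, x') ∈ C) :
    ∃ A : Matrix (Fin N) (Fin N) k, A * Aᵀ = 1 ∧
      (C : Set ((Fin N → k) × (Fin N → k)))
        = {p | ∃ x : Fin N → k, p = (x, Matrix.vecMul x A)} := by

  classical
  have hrefl := (hypBilin_symm k N).isRefl
  -- C equals its orthogonal as a submodule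
  have hCorth : C = (hypBilin k N).orthogonal C := by
    ext w
    constructor
    · intro hw c hc
      have : w ∈ (C : Set _) := hw
      rw [hsd] at this
      exact hrefl w c (this c hc)
    · intro hw
      have : w ∈ ({w | ∀ c ∈ C, hypForm k N w c = 0} : Set _) := by
        intro c hc
        exact hrefl c w (hw c hc)
      rw [← hsd] at this
      exact this
  -- orthogonality within C
  have horth : ∀ p ∈ C, ∀ q ∈ C, hypForm k N p q = 0 := by
    intro p hp q hq
    have : p ∈ (C : Set _) := hp
    rw [hsd] at this
    exact this q hq
  -- finrank C = N
  have hfr : Module.finrank k C = N := by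
    have h1 := LinearMap.BilinForm.finrank_orthogonal (hypBilin_nondeg k N) C
    rw [← hCorth] at h1
    have h2 : Module.finrank k ((Fin N → k) × (Fin N → k)) = N + N := by
      simp [Module.finrank_prod]
    have h3 : Module.finrank k C ≤ Module.finrank k ((Fin N → k) × (Fin N → k)) :=
      Submodule.finrank_le C
    omega
  -- the projection onto the first factor, restricted to C
  set π : C →ₗ[k] (Fin N → k) := (LinearMap.fst k (Fin N → k) (Fin N → k)).comp C.subtype with hπ
  have hsurj : Function.Surjective π := by
    intro x
    obtain ⟨x', hx'⟩ := hproj x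
    exact ⟨⟨(x, x'), hx'⟩, rfl⟩
  have hinj : Function.Injective π := by
    rw [LinearMap.injective_iff_surjective_of_finrank_eq_finrank (by simp [hfr])]
    exact hsurj
  have hbij : Function.Bijective π := ⟨hinj, hsurj⟩
  let e : C ≃ₗ[k] (Fin N → k) := LinearEquiv.ofBijective π hbij
  let f : (Fin N → k) →ₗ[k] (Fin N → k) :=
    (LinearMap.snd k (Fin N → k) (Fin N → k)).comp (C.subtype.comp e.symm.toLinearMap)
  have hg1 : ∀ x : Fin N → k, ((e.symm x : C) : (Fin N → k) × (Fin N → k)).1 = x := by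
    intro x
    have : π (e.symm x) = x := e.apply_symm_apply x
    exact this
  have hmem : ∀ x : Fin N → k, (x, f x) ∈ C := by
    intro x
    have : ((e.symm x : C) : (Fin N → k) × (Fin N → k)) ∈ C := (e.symm x).2
    have heq : ((e.symm x : C) : (Fin N → k) × (Fin N → k)) = (x, f x) := by
      ext <;> simp [f, hg1 x]
    rwa [heq] at this
  have hzero : ∀ y : Fin N → k, (0, y) ∈ C → y = 0 := by
    intro y hy
    have : π ⟨(0, y), hy⟩ = π 0 := by simp [hπ]
    have := hinj this
    have := congrArg (fun c : C => ((c : (Fin N → k) × (Fin N → k))).2) this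
    simpa using this
  set A : Matrix (Fin N) (Fin N) k := (LinearMap.toMatrix' f)ᵀ with hA
  have hvecMul : ∀ x : Fin N → k, Matrix.vecMul x A = f x := by
    intro x
    rw [hA, Matrix.vecMul_transpose]
    conv_rhs => rw [← Matrix.toLin'_toMatrix' f]
    rw [Matrix.toLin'_apply]
  refine ⟨A, ?_, ?_⟩
  · ext i j
    have h := horth _ (hmem (Pi.single i 1)) _ (hmem (Pi.single j 1))
    rw [hypForm] at h
    have h2 : ∑ l : Fin N, f (Pi.single i 1) l * f (Pi.single j 1) l
        = ∑ l : Fin N, Pi.single i (1:k) l * Pi.single j (1:k) l := by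
      have := sub_eq_zero.mp h
      simpa using this.symm
    have hfi : f (Pi.single i 1) = A i := by
      rw [← hvecMul, Matrix.single_one_vecMul]
      rfl
    have hfj : f (Pi.single j 1) = A j := by
      rw [← hvecMul, Matrix.single_one_vecMul]
      rfl
    rw [hfi, hfj] at h2
    rw [Matrix.mul_apply]
    simp only [Matrix.transpose_apply, Matrix.one_apply]
    rw [h2]
    simp [Pi.single_apply, mul_ite, Finset.sum_ite_eq, eq_comm]
  · ext p
    constructor
    · intro hp
      refine ⟨p.1, ?_⟩
      have hm := hmem p.1
      have hd : ((0 : Fin N → k), p.2 - f p.1) ∈ C := by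
        have := C.sub_mem hp hm
        have he : (p : (Fin N → k) × (Fin N → k)) - (p.1, f p.1)
            = ((0 : Fin N → k), p.2 - f p.1) := by
          ext <;> simp
        rwa [he] at this
      have := hzero _ hd
      have hp2 : p.2 = f p.1 := by
        have := sub_eq_zero.mp this
        exact this
      rw [hvecMul]
      exact Prod.ext rfl hp2
    · rintro ⟨x, rfl⟩
      rw [hvecMul]
      exact hmem x
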